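/- Let μ₁, …, μ_k be probability distributions on finite sets S₁, …, S_k, and let samples be drawn independently from each. For finite sets of assignments over pairwise disjoint variable sets with the combination map (τ₁,…,τ_k) ↦ τ₁ ∪ ⋯ ∪ τ_k a bijection onto S, the pushforward of the product distribution under this map assigns to each combined assignment τ the probability ∏ᵢ μᵢ(τᵢ). If each μᵢ is W-proportional on Sᵢ for a multiplicative positive weight W, the pushforward is W-proportional on S. -/

import Mathlib

/-- Combine assignments on the pieces `X i` of a cover of `V` into a single
assignment on `V`, evaluating `v` via (some) index whose piece contains it. -/
noncomputable def combine {V : Type*} {ι : Type*} (X : ι → Finset V)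
    (hcover : ∀ v : V, ∃ i : ι, v ∈ X i)
    (f : ∀ i : ι, {v // v ∈ X i} → Bool) (v : V) : Bool :=
  f (hcover v).choose ⟨v, (hcover v).choose_spec⟩

theorem combine_apply {V : Type*} {ι : Type*} (X : ι → Finset V)
    (hdisj : Pairwise (fun i j => Disjoint (X i) (X j)))
    (hcover : ∀ v : V, ∃ i : ι, v ∈ X i)
    (f : ∀ i : ι, {v // v ∈ X i} → Bool) {v : V} {i : ι} (hv : v ∈ X i) :
    combine X hcover f v = f i ⟨v, hv⟩ := by
  have h : (hcover v).choose = i := by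
    by_contra h
    exact Finset.disjoint_left.mp (hdisj h) (hcover v).choose_spec hv
  unfold combine
  subst h
  rfl

/-- Correctness of INC at a conjunction node with `k` children: for pairwise
disjoint variable sets `X i` covering `V`, the combination map is injective;
the pushforward of the product of the child distributions assigns to each
combined assignment the product of the children's probabilities; and if each
child distribution is `W`-proportional on its satisfying set `S i`, the
pushforward is `W`-proportional on the combined satisfying set `S`. -/
theorem stmt_14 {V : Type*} [Fintype V] [DecidableEq V]
    {ι : Type*} [Fintype ι] [DecidableEq ι]
    (X : ι → Finset V) (hdisj : Pairwise (fun i j => Disjoint (X i) (X j)))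
    (hcover : ∀ v : V, ∃ i : ι, v ∈ X i)
    (μ : ∀ i : ι, ({v // v ∈ X i} → Bool) → ℝ)
    (hμ0 : ∀ i g, 0 ≤ μ i g) (hμ1 : ∀ i, ∑ g : {v // v ∈ X i} → Bool, μ i g = 1)
    (p : (V → Bool) → ℝ)
    (hp : ∀ τ : V → Bool,
      p τ = ∑ f ∈ Finset.univ.filter
              (fun f : ∀ i : ι, {v // v ∈ X i} → Bool => combine X hcover f = τ),
              ∏ i : ι, μ i (f i)) :
    Function.Injective (combine X hcover) ∧
    (∀ f : ∀ i : ι, {v // v ∈ X i} → Bool,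
      p (combine X hcover f) = ∏ i : ι, μ i (f i)) ∧
    (∀ (W : V → Bool → ℝ), (∀ v b, 0 < W v b) →
      ∀ (S : ∀ i : ι, Finset ({v // v ∈ X i} → Bool)), (∀ i, (S i).Nonempty) →
      (∀ i g, μ i g =
        if g ∈ S i then
          (∏ v : {v // v ∈ X i}, W v.1 (g v)) /
            ∑ g' ∈ S i, ∏ v : {v // v ∈ X i}, W v.1 (g' v)
        else 0) →
      ∀ τ ∈ Finset.univ.filter
          (fun τ : V → Bool =>
            ∃ f ∈ Finset.univ.pi (fun i : ι => S i),
              combine X hcover (fun i => f i (Finset.mem_univ i)) = τ),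
        p τ = (∏ v : V, W v (τ v)) /
          ∑ τ' ∈ Finset.univ.filter
              (fun τ' : V → Bool =>
                ∃ f ∈ Finset.univ.pi (fun i : ι => S i),
                  combine X hcover (fun i => f i (Finset.mem_univ i)) = τ'),
            ∏ v : V, W v (τ' v)) := by
  have hc := fun f => @combine_apply V ι X hdisj hcover f
  have hinj : Function.Injective (combine X hcover) := by
    intro f g h
    funext i v
    have h1 := congrFun h v.1
    rw [hc f v.2, hc g v.2] at h1
    simpa using h1
  have hpush : ∀ f, p (combine X hcover f) = ∏ i, μ i (f i) := by
    intro f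
    rw [hp]
    have : Finset.univ.filter
        (fun g : ∀ i : ι, {v // v ∈ X i} → Bool =>
          combine X hcover g = combine X hcover f) = {f} := by
      ext g; simp [hinj.eq_iff]
    rw [this, Finset.sum_singleton]
  refine ⟨hinj, hpush, ?_⟩
  intro W hW S hS hμ τ hτ
  simp only [Finset.mem_filter, Finset.mem_univ, true_and] at hτ
  obtain ⟨f, hf, rfl⟩ := hτ
  set f' : ∀ i, {v // v ∈ X i} → Bool := fun i => f i (Finset.mem_univ i) with hf'
  have hfS : ∀ i, f' i ∈ S i := fun i => Finset.mem_pi.mp hf i (Finset.mem_univ i)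
  -- decomposing products over V along the partition
  have hcov : (Finset.univ : Finset V) = Finset.univ.biUnion X := by
    ext v; simpa using hcover v
  have hprod : ∀ τ' : V → Bool, (∏ v : V, W v (τ' v))
      = ∏ i : ι, ∏ v : {v // v ∈ X i}, W v.1 (τ' v.1) := by
    intro τ'
    rw [show (∏ v : V, W v (τ' v)) = ∏ v ∈ Finset.univ, W v (τ' v) from rfl, hcov,
      Finset.prod_biUnion (fun i _ j _ hij => hdisj hij)]
    exact Finset.prod_congr rfl fun i _ =>
      (Finset.prod_coe_sort (X i) (fun v => W v (τ' v))).symm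
  -- numerator of each combined assignment
  have hnum : ∀ g : ∀ i, {v // v ∈ X i} → Bool,
      (∏ v : V, W v (combine X hcover g v))
        = ∏ i : ι, ∏ v : {v // v ∈ X i}, W v.1 (g i v) := by
    intro g
    rw [hprod]
    exact Finset.prod_congr rfl fun i _ =>
      Finset.prod_congr rfl fun v _ => by rw [hc g v.2]
  -- the denominator identity
  have hden : (∏ i : ι, ∑ g' ∈ S i, ∏ v : {v // v ∈ X i}, W v.1 (g' v))
      = ∑ τ' ∈ Finset.univ.filter
          (fun τ' : V → Bool =>
            ∃ f ∈ Finset.univ.pi (fun i : ι => S i),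
              combine X hcover (fun i => f i (Finset.mem_univ i)) = τ'),
          ∏ v : V, W v (τ' v) := by
    rw [Finset.prod_sum]
    refine Finset.sum_bij
      (fun g _ => combine X hcover (fun i => g i (Finset.mem_univ i))) ?_ ?_ ?_ ?_
    · intro g hg
      simp only [Finset.mem_filter, Finset.mem_univ, true_and]
      exact ⟨g, hg, rfl⟩
    · intro g₁ hg₁ g₂ hg₂ h
      have := hinj h
      funext i hi
      exact congrFun this i
    · intro τ' hτ'
      simp only [Finset.mem_filter, Finset.mem_univ, true_and] at hτ'
      obtain ⟨g, hg, hgτ⟩ := hτ'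
      exact ⟨g, hg, hgτ⟩
    · intro g hg
      rw [hnum]
      rw [show (∏ x ∈ Finset.univ.attach,
          ∏ v : {v // v ∈ X x.1}, W v.1 (g x.1 x.2 v))
        = ∏ x ∈ Finset.univ.attach,
          ∏ v : {v // v ∈ X x.1}, W v.1 (g x.1 (Finset.mem_univ x.1) v) from rfl]
      rw [Finset.prod_attach Finset.univ
        (fun i => ∏ v : {v // v ∈ X i}, W v.1 (g i (Finset.mem_univ i) v))]
  -- conclude
  rw [hpush, hnum]
  calc (∏ i : ι, μ i (f' i))
      = ∏ i : ι, ((∏ v : {v // v ∈ X i}, W v.1 (f' i v)) /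
          ∑ g' ∈ S i, ∏ v : {v // v ∈ X i}, W v.1 (g' v)) := by
        exact Finset.prod_congr rfl fun i _ => by rw [hμ i (f' i), if_pos (hfS i)]
    _ = (∏ i : ι, ∏ v : {v // v ∈ X i}, W v.1 (f' i v)) /
          (∏ i : ι, ∑ g' ∈ S i, ∏ v : {v // v ∈ X i}, W v.1 (g' v)) :=
        Finset.prod_div_distrib _ _
    _ = _ := by rw [hden]
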